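/- Fix integers d ≥ 2, b ≥ 3 and a nonempty proper set A ⊊ {0,...,b−1}, and let E = (d−1)·log(b−|A|) / ((d−1)·log(b−|A|) + log b). Then sep^{1/2}_{S(d,b,A,1)}(n) ≽ n^E: there exists a constant c > 0 such that for infinitely many n, sep^{1/2}_{S(d,b,A,1)}(n) ≥ c·n^E. -/

import Mathlib

open scoped Classical

/-- Reachability within the subgraph of `X` induced on a vertex set `s`. -/
def SimpleGraph.ReachIn {V : Type*} (X : SimpleGraph V) (s : Set V) (v w : V) : Prop :=
  ∃ (hv : v ∈ s) (hw : w ∈ s), (X.induce s).Reachable ⟨v, hv⟩ ⟨w, hw⟩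

/-- The vertex set of the connected component of `v` in the subgraph of `X` induced on `s`
(empty if `v ∉ s`). -/
def SimpleGraph.compIn {V : Type*} (X : SimpleGraph V) (s : Set V) (v : V) : Set V :=
  {w | X.ReachIn s v w}

/-- `T` is a vertex set witnessing `cut¹ᐟ²` for the subgraph of `X` induced on the finite
vertex set `G`: after removing `T` from `G`, every connected component has at most
`|G|/2` vertices. -/
def IsHalfCutSet {V : Type*} (X : SimpleGraph V) (G T : Finset V) : Prop :=
  T ⊆ G ∧ ∀ v : V, 2 * (X.compIn (↑(G \ T)) v).ncard ≤ G.card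

/-- `cut¹ᐟ²` of the subgraph of `X` induced on the finite vertex set `G`: the least size of
a vertex set whose removal leaves all connected components of size at most `|G|/2`. -/
noncomputable def cutHalf {V : Type*} (X : SimpleGraph V) (G : Finset V) : ℕ :=
  sInf {t | ∃ T : Finset V, IsHalfCutSet X G T ∧ T.card = t}

/-- The `1/2`-separation profile of `X`, over finite subgraphs with vertex set inside `W`. -/
noncomputable def sepHalf {V : Type*} (X : SimpleGraph V) (W : Set V) (n : ℕ) : ℕ :=
  sSup {c | ∃ G : Finset V, ↑G ⊆ W ∧ G.card ≤ n ∧ c = cutHalf X G}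

/-- The `i`-th digit of `x` in base `b`. -/
def digit (b i x : ℕ) : ℕ := x / b ^ i % b

/-- Membership in the vertex set `V_k` of `Γ_k(d,b,A,m)`: all coordinates lie in `[0, b^k)`
and at every digit position `j < k`, at most `m` coordinates have their `j`-th base-`b`
digit in `A`. -/
def GenMem (d b : ℕ) (A : Finset ℕ) (m k : ℕ) (x : Fin d → ℕ) : Prop :=
  (∀ i, x i < b ^ k) ∧
    ∀ j < k, (Finset.univ.filter fun i : Fin d => digit b j (x i) ∈ A).card ≤ m

/-- The vertex set of `S(d,b,A,m) = ⋃ₖ Γ_k(d,b,A,m)`. -/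
def GenS (d b : ℕ) (A : Finset ℕ) (m : ℕ) : Set (Fin d → ℕ) :=
  {x | ∃ k, GenMem d b A m k x}

/-- The infinite graph `S(d,b,A,m)`, with edges between valid points at `ℓ¹`-distance 1. -/
def GenGraph (d b : ℕ) (A : Finset ℕ) (m : ℕ) : SimpleGraph (Fin d → ℕ) where
  Adj x y := x ∈ GenS d b A m ∧ y ∈ GenS d b A m ∧ (∑ i, |(x i : ℤ) - y i|) = 1
  symm := by
    constructor
    rintro x y ⟨hx, hy, h⟩
    refine ⟨hy, hx, ?_⟩
    rw [← h]
    exact Finset.sum_congr rfl fun i _ => abs_sub_comm _ _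
  loopless := by constructor; rintro x ⟨-, -, h⟩; simp at h

/-- The vertex set of `Γ_k(d,b,A,m)`. -/
noncomputable def GenGammaV (d b : ℕ) (A : Finset ℕ) (m k : ℕ) : Finset (Fin d → ℕ) :=
  (Fintype.piFinset fun _ : Fin d => Finset.range (b ^ k)).filter (GenMem d b A m k)

/-- The full line of length `b^k` through `x` in coordinate direction `i` is entirely
contained in `Γ_k(d,b,A,m)`. -/
def GenLineComplete (d b : ℕ) (A : Finset ℕ) (m k : ℕ) (i : Fin d) (x : Fin d → ℕ) : Prop :=
  ∀ t < b ^ k, GenMem d b A m k (Function.update x i t)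

/-- The set of points of the full line of length `b^k` through `x` in direction `i`. -/
def GenLineSet (d b k : ℕ) (i : Fin d) (x : Fin d → ℕ) : Set (Fin d → ℕ) :=
  {y | ∃ t < b ^ k, y = Function.update x i t}

/-- The vertex set of the complete-lines subgraph `C_k` of `Γ_k(d,b,A,m)`. -/
noncomputable def GenCkV (d b : ℕ) (A : Finset ℕ) (m k : ℕ) : Finset (Fin d → ℕ) :=
  (GenGammaV d b A m k).filter fun x => ∃ i : Fin d, GenLineComplete d b A m k i x

/-- `N`, the number of single-column digit configurations of `d-1` coordinates with at
most `m-1` digits in `A`. -/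
def genN (d b : ℕ) (A : Finset ℕ) (m : ℕ) : ℕ :=
  ∑ i ∈ Finset.range m, (d - 1).choose i * A.card ^ i * (b - A.card) ^ (d - i - 1)
namespace GenSep

/-- base-b encoding of a digit tuple -/
def enc (b : ℕ) {k : ℕ} (f : Fin k → ℕ) : ℕ := ∑ j : Fin k, f j * b ^ (j : ℕ)

theorem enc_succ (b : ℕ) {k : ℕ} (f : Fin (k+1) → ℕ) :
    enc b f = f 0 + b * enc b (fun j : Fin k => f j.succ) := by
  unfold enc
  rw [Fin.sum_univ_succ]
  simp [Finset.mul_sum, pow_succ, mul_comm, mul_assoc, mul_left_comm]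

theorem enc_lt (b : ℕ) (hb : 1 ≤ b) : ∀ {k : ℕ} (f : Fin k → ℕ), (∀ j, f j < b) → enc b f < b ^ k := by
  intro k
  induction k with
  | zero => intro f hf; simp [enc]
  | succ k ih =>
    intro f hf
    rw [enc_succ]
    have h1 : enc b (fun j : Fin k => f j.succ) < b ^ k := ih _ (fun j => hf _)
    have h2 : f 0 < b := hf 0
    have h3 : b * (enc b (fun j : Fin k => f j.succ) + 1) ≤ b * b ^ k :=
      Nat.mul_le_mul_left _ (by omega)
    rw [pow_succ']
    rw [Nat.mul_add, Nat.mul_one] at h3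
    have h2 : f 0 < b := hf 0
    omega

theorem digit_enc (b : ℕ) (hb : 1 ≤ b) : ∀ {k : ℕ} (f : Fin k → ℕ), (∀ j, f j < b) →
    ∀ j : Fin k, digit b (j : ℕ) (enc b f) = f j := by
  intro k
  induction k with
  | zero => intro f hf j; exact absurd j.2 (by omega)
  | succ k ih =>
    intro f hf j
    rw [enc_succ]
    rcases Fin.eq_zero_or_eq_succ j with rfl | ⟨j', rfl⟩
    · show (f 0 + b * enc b _) / b ^ 0 % b = f 0
      simp [Nat.add_mul_mod_self_left, Nat.mod_eq_of_lt (hf 0)]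
    · show (f 0 + b * enc b _) / b ^ ((j' : ℕ) + 1) % b = f j'.succ
      rw [pow_succ']
      rw [← Nat.div_div_eq_div_mul]
      have : (f 0 + b * enc b (fun j : Fin k => f j.succ)) / b = enc b (fun j : Fin k => f j.succ) := by
        rw [Nat.add_mul_div_left _ _ (by omega), Nat.div_eq_of_lt (hf 0)]
        omega
      rw [this]
      exact ih _ (fun j => hf _) j'

end GenSep

namespace GenSep

/-- numbers < b^k with all base-b digits outside A -/
noncomputable def RSet (b : ℕ) (A : Finset ℕ) (k : ℕ) : Finset ℕ :=
  (Fintype.piFinset fun _ : Fin k => Finset.range b \ A).image (enc b)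

variable {b k : ℕ} {A : Finset ℕ}

theorem mem_RSet_lt (hb : 1 ≤ b) {x : ℕ} (hx : x ∈ RSet b A k) : x < b ^ k := by
  rw [RSet, Finset.mem_image] at hx
  obtain ⟨f, hf, rfl⟩ := hx
  rw [Fintype.mem_piFinset] at hf
  exact enc_lt b hb f fun j => Finset.mem_range.mp (Finset.mem_sdiff.mp (hf j)).1

theorem mem_RSet_digit (hb : 1 ≤ b) {x : ℕ} (hx : x ∈ RSet b A k) {j : ℕ} (hj : j < k) :
    digit b j x ∉ A := by
  rw [RSet, Finset.mem_image] at hx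
  obtain ⟨f, hf, rfl⟩ := hx
  rw [Fintype.mem_piFinset] at hf
  have := digit_enc b hb f (fun j => Finset.mem_range.mp (Finset.mem_sdiff.mp (hf j)).1) ⟨j, hj⟩
  rw [this]
  exact (Finset.mem_sdiff.mp (hf ⟨j, hj⟩)).2

theorem RSet_card (hb : 1 ≤ b) (hA : A ⊆ Finset.range b) :
    (RSet b A k).card = (b - A.card) ^ k := by
  rw [RSet, Finset.card_image_of_injOn, Fintype.card_piFinset]
  · simp [Finset.card_sdiff_of_subset hA]
  · intro f hf g hg hfg
    rw [Finset.mem_coe, Fintype.mem_piFinset] at hf hg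
    funext j
    have h1 := digit_enc b hb f (fun j => Finset.mem_range.mp (Finset.mem_sdiff.mp (hf j)).1) j
    have h2 := digit_enc b hb g (fun j => Finset.mem_range.mp (Finset.mem_sdiff.mp (hg j)).1) j
    rw [← h1, ← h2, hfg]

end GenSep

namespace GenSep

variable (d b k : ℕ) (A : Finset ℕ)

/-- Bases of direction-`i` lines in the `s`-structure rooted at `x₀`. -/
noncomputable def Zb (s : Finset (Fin d)) (i : Fin d) (x₀ : Fin d → ℕ) : Finset (Fin d → ℕ) :=
  Fintype.piFinset fun j => if j = i then {0} else if j ∈ s then RSet b A k else {x₀ j}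

/-- The direction-`i` line through `z`. -/
noncomputable def Line (i : Fin d) (z : Fin d → ℕ) : Finset (Fin d → ℕ) :=
  (Finset.range (b ^ k)).image (Function.update z i)

/-- The union of complete lines structure on active coordinates `s`, rooted at `x₀`. -/
noncomputable def Gs (s : Finset (Fin d)) (x₀ : Fin d → ℕ) : Finset (Fin d → ℕ) :=
  s.biUnion fun i => (Zb d b k A s i x₀).biUnion fun z => Line d b k i z

noncomputable def Gtop : Finset (Fin d → ℕ) := Gs d b k A Finset.univ (fun _ => 0)

variable {d b k A}

theorem mem_Line {i : Fin d} {z w : Fin d → ℕ} :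
    w ∈ Line d b k i z ↔ ∃ t, t < b ^ k ∧ w = Function.update z i t := by
  simp [Line, Finset.mem_image, eq_comm]

theorem card_Line (i : Fin d) (z : Fin d → ℕ) : (Line d b k i z).card = b ^ k := by
  rw [Line, Finset.card_image_of_injOn, Finset.card_range]
  intro a _ c _ h
  have := congrFun h i
  simpa using this

theorem mem_Gs {s : Finset (Fin d)} {x₀ w : Fin d → ℕ} :
    w ∈ Gs d b k A s x₀ ↔ ∃ i ∈ s, w i < b ^ k ∧ (∀ j ∈ s, j ≠ i → w j ∈ RSet b A k) ∧
      (∀ j ∉ s, w j = x₀ j) := by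
  constructor
  · intro hw
    rw [Gs, Finset.mem_biUnion] at hw
    obtain ⟨i, hi, hw⟩ := hw
    rw [Finset.mem_biUnion] at hw
    obtain ⟨z, hz, hw⟩ := hw
    rw [mem_Line] at hw
    obtain ⟨t, ht, rfl⟩ := hw
    rw [Zb, Fintype.mem_piFinset] at hz
    refine ⟨i, hi, by simpa using ht, ?_, ?_⟩
    · intro j hj hji
      have := hz j
      rw [if_neg hji, if_pos hj] at this
      simpa [Function.update_of_ne hji] using this
    · intro j hj
      have hji : j ≠ i := fun h => hj (h ▸ hi)
      have := hz j
      rw [if_neg hji, if_neg hj] at this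
      simpa [Function.update_of_ne hji] using Finset.mem_singleton.mp this
  · rintro ⟨i, hi, hwi, hws, hwo⟩
    rw [Gs, Finset.mem_biUnion]
    refine ⟨i, hi, ?_⟩
    rw [Finset.mem_biUnion]
    refine ⟨Function.update w i 0, ?_, ?_⟩
    · rw [Zb, Fintype.mem_piFinset]
      intro j
      by_cases hji : j = i
      · subst hji; simp
      · rw [if_neg hji, Function.update_of_ne hji]
        by_cases hjs : j ∈ s
        · rw [if_pos hjs]; exact hws j hjs hji
        · rw [if_neg hjs]; exact Finset.mem_singleton.mpr (hwo j hjs)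
    · rw [mem_Line]
      refine ⟨w i, hwi, ?_⟩
      funext j
      by_cases hji : j = i
      · subst hji; simp
      · simp [Function.update_of_ne hji]

theorem card_Zb {s : Finset (Fin d)} {i : Fin d} (hi : i ∈ s) (x₀ : Fin d → ℕ) :
    (Zb d b k A s i x₀).card = (RSet b A k).card ^ (s.card - 1) := by
  rw [Zb, Fintype.card_piFinset]
  have : ∀ j : Fin d, (if j = i then ({0} : Finset ℕ) else if j ∈ s then RSet b A k
      else {x₀ j}).card = if j ∈ s.erase i then (RSet b A k).card else 1 := by
    intro j
    by_cases hji : j = i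
    · subst hji; simp [hi]
    · rw [if_neg hji]
      by_cases hjs : j ∈ s
      · simp [hjs, hji]
      · simp [hjs, Finset.mem_erase, hji]
  rw [Finset.prod_congr rfl fun j _ => this j, Finset.prod_ite_mem,
    Finset.univ_inter, Finset.prod_const, Finset.card_erase_of_mem hi]

end GenSep

namespace GenSep

variable {d b k : ℕ} {A : Finset ℕ}

theorem genS_mem (hb : 1 ≤ b) {x : Fin d → ℕ} (i : Fin d) (hxi : x i < b ^ k)
    (hx : ∀ j, j ≠ i → x j ∈ RSet b A k) : x ∈ GenS d b A 1 := by
  refine ⟨k, ⟨?_, ?_⟩⟩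
  · intro j
    by_cases hji : j = i
    · subst hji; exact hxi
    · exact mem_RSet_lt hb (hx j hji)
  · intro j hj
    have hsub : (Finset.univ.filter fun i' : Fin d => digit b j (x i') ∈ A) ⊆ {i} := by
      intro j' hj'
      rw [Finset.mem_filter] at hj'
      rw [Finset.mem_singleton]
      by_contra hne
      exact mem_RSet_digit hb (hx j' hne) hj hj'.2
    simpa using Finset.card_le_card hsub

theorem adj_step (hb : 1 ≤ b) (i : Fin d) {z : Fin d → ℕ}
    (hz : ∀ j, j ≠ i → z j ∈ RSet b A k) {c : ℕ} (hc : c + 1 < b ^ k) :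
    (GenGraph d b A 1).Adj (Function.update z i c) (Function.update z i (c + 1)) := by
  refine ⟨?_, ?_, ?_⟩
  · exact genS_mem (k := k) hb i (by simp; omega) (fun j hj => by
      rw [Function.update_of_ne hj]; exact hz j hj)
  · exact genS_mem (k := k) hb i (by simpa using hc) (fun j hj => by
      rw [Function.update_of_ne hj]; exact hz j hj)
  · rw [Finset.sum_eq_single i]
    · simp
    · intro j _ hj
      simp [Function.update_of_ne hj]
    · simp

theorem reachIn_of_adj {V : Type*} {X : SimpleGraph V} {s : Set V} {u u' : V}
    (hu : u ∈ s) (hu' : u' ∈ s) (h : X.Adj u u') : X.ReachIn s u u' :=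
  ⟨hu, hu', SimpleGraph.Adj.reachable (by exact h)⟩

theorem reachIn_refl {V : Type*} {X : SimpleGraph V} {s : Set V} {u : V} (hu : u ∈ s) :
    X.ReachIn s u u := ⟨hu, hu, SimpleGraph.Reachable.refl _⟩

theorem reachIn_symm {V : Type*} {X : SimpleGraph V} {s : Set V} {u u' : V}
    (h : X.ReachIn s u u') : X.ReachIn s u' u := by
  obtain ⟨hu, hu', hr⟩ := h
  exact ⟨hu', hu, hr.symm⟩

theorem reachIn_trans {V : Type*} {X : SimpleGraph V} {s : Set V} {u u' u'' : V}
    (h : X.ReachIn s u u') (h' : X.ReachIn s u' u'') : X.ReachIn s u u'' := by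
  obtain ⟨hu, hu', hr⟩ := h
  obtain ⟨hv', hv'', hr'⟩ := h'
  exact ⟨hu, hv'', hr.trans hr'⟩

/-- Reachability in `Gtop` minus cut set `T`. -/
def Rel (d b k : ℕ) (A : Finset ℕ) (T : Finset (Fin d → ℕ)) (v w : Fin d → ℕ) : Prop :=
  (GenGraph d b A 1).ReachIn ((↑(Gtop d b k A) : Set (Fin d → ℕ)) \ ↑T) v w

theorem line_subset_Gtop {i : Fin d} {z : Fin d → ℕ} (hz : ∀ j, j ≠ i → z j ∈ RSet b A k) :
    Line d b k i z ⊆ Gtop d b k A := by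
  intro w hw
  rw [mem_Line] at hw
  obtain ⟨t, ht, rfl⟩ := hw
  rw [Gtop, mem_Gs]
  refine ⟨i, Finset.mem_univ i, by simpa using ht, ?_, fun j hj => absurd (Finset.mem_univ j) hj⟩
  intro j _ hji
  rw [Function.update_of_ne hji]
  exact hz j hji

theorem line_rel (hb : 1 ≤ b) {T : Finset (Fin d → ℕ)} {i : Fin d} {z : Fin d → ℕ}
    (hz : ∀ j, j ≠ i → z j ∈ RSet b A k) (halive : ∀ w ∈ Line d b k i z, w ∉ T) :
    ∀ w ∈ Line d b k i z, ∀ w' ∈ Line d b k i z, Rel d b k A T w w' := by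
  have hmem : ∀ t, t < b ^ k → Function.update z i t ∈
      ((↑(Gtop d b k A) : Set (Fin d → ℕ)) \ ↑T) := by
    intro t ht
    have hl : Function.update z i t ∈ Line d b k i z := mem_Line.mpr ⟨t, ht, rfl⟩
    exact ⟨line_subset_Gtop hz hl, fun hT => halive _ hl hT⟩
  have aux : ∀ n c, c + n < b ^ k →
      Rel d b k A T (Function.update z i c) (Function.update z i (c + n)) := by
    intro n
    induction n with
    | zero => intro c hc; exact reachIn_refl (hmem c (by omega))
    | succ n ih =>
      intro c hc
      refine reachIn_trans (ih c (by omega)) ?_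
      have : c + (n + 1) = (c + n) + 1 := by omega
      rw [this]
      exact reachIn_of_adj (hmem _ (by omega)) (hmem _ (by omega))
        (adj_step hb i hz (by omega))
  intro w hw w' hw'
  obtain ⟨t, ht, rfl⟩ := mem_Line.mp hw
  obtain ⟨t', ht', rfl⟩ := mem_Line.mp hw'
  rcases le_total t t' with h | h
  · have : t' = t + (t' - t) := by omega
    rw [this]; exact aux _ _ (by omega)
  · have : t = t' + (t - t') := by omega
    rw [this]; exact reachIn_symm (aux _ _ (by omega))

end GenSep

namespace GenSep

variable {d b k : ℕ} {A : Finset ℕ}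

theorem zb_coords {s : Finset (Fin d)} {i : Fin d} {x₀ z : Fin d → ℕ}
    (hz : z ∈ Zb d b k A s i x₀) :
    z i = 0 ∧ (∀ j ∈ s, j ≠ i → z j ∈ RSet b A k) ∧ (∀ j ∉ s, j ≠ i → z j = x₀ j) := by
  rw [Zb, Fintype.mem_piFinset] at hz
  refine ⟨by simpa using hz i, ?_, ?_⟩
  · intro j hj hji
    have := hz j
    rwa [if_neg hji, if_pos hj] at this
  · intro j hj hji
    have := hz j
    rw [if_neg hji, if_neg hj] at this
    simpa using this

theorem zb_mem {s : Finset (Fin d)} {i : Fin d} {x₀ z : Fin d → ℕ}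
    (h0 : z i = 0) (hR : ∀ j ∈ s, j ≠ i → z j ∈ RSet b A k)
    (ho : ∀ j ∉ s, j ≠ i → z j = x₀ j) : z ∈ Zb d b k A s i x₀ := by
  rw [Zb, Fintype.mem_piFinset]
  intro j
  by_cases hji : j = i
  · subst hji; simpa using h0
  · rw [if_neg hji]
    by_cases hjs : j ∈ s
    · rw [if_pos hjs]; exact hR j hjs hji
    · rw [if_neg hjs]; exact Finset.mem_singleton.mpr (ho j hjs hji)

theorem zb_rset {s : Finset (Fin d)} {i : Fin d} {x₀ z : Fin d → ℕ}
    (hx₀ : ∀ j ∉ s, x₀ j ∈ RSet b A k) (hz : z ∈ Zb d b k A s i x₀) :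
    ∀ j, j ≠ i → z j ∈ RSet b A k := by
  obtain ⟨h0, hR, ho⟩ := zb_coords hz
  intro j hji
  by_cases hjs : j ∈ s
  · exact hR j hjs hji
  · rw [ho j hjs hji]; exact hx₀ j hjs

theorem line_subset_Gs {s : Finset (Fin d)} {i : Fin d} {x₀ z : Fin d → ℕ}
    (hi : i ∈ s) (hz : z ∈ Zb d b k A s i x₀) : Line d b k i z ⊆ Gs d b k A s x₀ := by
  rw [Gs]
  intro w hw
  rw [Finset.mem_biUnion]
  exact ⟨i, hi, Finset.mem_biUnion.mpr ⟨z, hz, hw⟩⟩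

theorem Gs_subset_Gtop {s : Finset (Fin d)} {x₀ : Fin d → ℕ}
    (hx₀ : ∀ j ∉ s, x₀ j ∈ RSet b A k) : Gs d b k A s x₀ ⊆ Gtop d b k A := by
  intro w hw
  rw [mem_Gs] at hw
  obtain ⟨i, hi, hwi, hR, ho⟩ := hw
  rw [Gtop, mem_Gs]
  refine ⟨i, Finset.mem_univ i, hwi, ?_, fun j hj => absurd (Finset.mem_univ j) hj⟩
  intro j _ hji
  by_cases hjs : j ∈ s
  · exact hR j hjs hji
  · rw [ho j hjs]; exact hx₀ j hjs

theorem lines_disjoint {s : Finset (Fin d)} {i : Fin d} {x₀ z z' : Fin d → ℕ}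
    (hz : z ∈ Zb d b k A s i x₀) (hz' : z' ∈ Zb d b k A s i x₀) (hne : z ≠ z') :
    Disjoint (Line d b k i z) (Line d b k i z') := by
  rw [Finset.disjoint_left]
  intro w hw hw'
  obtain ⟨t, ht, rfl⟩ := mem_Line.mp hw
  obtain ⟨t', ht', he⟩ := mem_Line.mp hw'
  apply hne
  funext j
  by_cases hji : j = i
  · subst hji; rw [(zb_coords hz).1, (zb_coords hz').1]
  · have := congrFun he j
    simpa [Function.update_of_ne hji] using this

theorem card_Gs_le {s : Finset (Fin d)} (x₀ : Fin d → ℕ) :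
    (Gs d b k A s x₀).card ≤ s.card * ((RSet b A k).card ^ (s.card - 1) * b ^ k) := by
  rw [Gs]
  calc (s.biUnion fun i => (Zb d b k A s i x₀).biUnion fun z => Line d b k i z).card
      ≤ ∑ i ∈ s, ((Zb d b k A s i x₀).biUnion fun z => Line d b k i z).card :=
        Finset.card_biUnion_le
    _ ≤ ∑ i ∈ s, (RSet b A k).card ^ (s.card - 1) * b ^ k := by
        refine Finset.sum_le_sum fun i hi => ?_
        calc ((Zb d b k A s i x₀).biUnion fun z => Line d b k i z).card
            ≤ ∑ z ∈ Zb d b k A s i x₀, (Line d b k i z).card := Finset.card_biUnion_le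
          _ = (RSet b A k).card ^ (s.card - 1) * b ^ k := by
              rw [Finset.sum_congr rfl fun z _ => card_Line i z, Finset.sum_const,
                card_Zb hi, smul_eq_mul]
    _ = s.card * ((RSet b A k).card ^ (s.card - 1) * b ^ k) := by
        rw [Finset.sum_const, smul_eq_mul]

theorem card_Gs_ge {s : Finset (Fin d)} {i : Fin d} (hi : i ∈ s) (x₀ : Fin d → ℕ) :
    (RSet b A k).card ^ (s.card - 1) * b ^ k ≤ (Gs d b k A s x₀).card := by
  have hsub : ((Zb d b k A s i x₀).biUnion fun z => Line d b k i z) ⊆ Gs d b k A s x₀ := by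
    intro w hw
    rw [Finset.mem_biUnion] at hw
    obtain ⟨z, hz, hw⟩ := hw
    exact line_subset_Gs hi hz hw
  calc (RSet b A k).card ^ (s.card - 1) * b ^ k
      = ∑ z ∈ Zb d b k A s i x₀, (Line d b k i z).card := by
        rw [Finset.sum_congr rfl fun z _ => card_Line i z, Finset.sum_const, card_Zb hi,
          smul_eq_mul]
    _ = ((Zb d b k A s i x₀).biUnion fun z => Line d b k i z).card :=
        (Finset.card_biUnion fun z hz z' hz' hne => lines_disjoint hz hz' hne).symm
    _ ≤ (Gs d b k A s x₀).card := Finset.card_le_card hsub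

end GenSep

namespace GenSep

variable {d b k : ℕ} {A : Finset ℕ}

theorem line_base {s : Finset (Fin d)} {i : Fin d} {x₀ z w : Fin d → ℕ}
    (hz : z ∈ Zb d b k A s i x₀) (hw : w ∈ Line d b k i z) : Function.update w i 0 = z := by
  obtain ⟨t, ht, rfl⟩ := mem_Line.mp hw
  funext j
  by_cases hji : j = i
  · subst hji; simp [(zb_coords hz).1]
  · simp [Function.update_of_ne hji]

end GenSep

namespace GenSep

variable {d b k : ℕ} {A : Finset ℕ}

theorem key (hb : 1 ≤ b) (hρ : 1 ≤ (RSet b A k).card) (T : Finset (Fin d → ℕ)) :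
    ∀ q : ℕ, 1 ≤ q → ∀ (s : Finset (Fin d)) (x₀ : Fin d → ℕ), s.card = q →
    (∀ j ∉ s, x₀ j ∈ RSet b A k) →
    3 * 5 ^ q * (T ∩ Gs d b k A s x₀).card ≤ (RSet b A k).card ^ (q - 1) →
    ∃ v, ∀ i ∈ s, (RSet b A k).card ^ (q - 1) ≤
      ((Zb d b k A s i x₀).filter fun z => ∀ w ∈ Line d b k i z, Rel d b k A T v w).card
        + 5 ^ q * (T ∩ Gs d b k A s x₀).card := by
  intro q
  induction q with
  | zero => omega
  | succ p ih =>
    intro _ s x₀ hcard hx₀ hsmall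
    rcases Nat.eq_zero_or_pos p with rfl | hp
    · -- base case : single direction
      obtain ⟨i₀, rfl⟩ := Finset.card_eq_one.mp hcard
      have ht0 : (T ∩ Gs d b k A {i₀} x₀).card = 0 := by
        have h1 : (3 * 5 ^ (0 + 1)) * (T ∩ Gs d b k A {i₀} x₀).card ≤ 1 := by
          simpa using hsmall
        omega
      have hTdisj : ∀ w ∈ Gs d b k A {i₀} x₀, w ∉ T := by
        intro w hw hwT
        have : w ∈ T ∩ Gs d b k A {i₀} x₀ := Finset.mem_inter.mpr ⟨hwT, hw⟩
        rw [Finset.card_eq_zero.mp ht0] at this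
        exact absurd this (Finset.notMem_empty w)
      set z₀ : Fin d → ℕ := fun j => if j = i₀ then 0 else x₀ j with hz₀
      have hz₀mem : z₀ ∈ Zb d b k A {i₀} i₀ x₀ := by
        refine zb_mem (by simp [hz₀]) ?_ ?_
        · intro j hj hji; exact absurd (Finset.mem_singleton.mp hj) hji
        · intro j hj hji; simp [hz₀, hji]
      have hzR : ∀ j, j ≠ i₀ → z₀ j ∈ RSet b A k := by
        intro j hji
        simp only [hz₀, if_neg hji]
        exact hx₀ j (by simpa using hji)
      have halive : ∀ w ∈ Line d b k i₀ z₀, w ∉ T :=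
        fun w hw => hTdisj w (line_subset_Gs (Finset.mem_singleton_self i₀) hz₀mem hw)
      have hz₀line : z₀ ∈ Line d b k i₀ z₀ := by
        rw [mem_Line]
        refine ⟨0, Nat.pow_pos (by omega), ?_⟩
        funext j
        by_cases hji : j = i₀
        · subst hji; simp [hz₀]
        · rw [Function.update_of_ne hji]
      refine ⟨z₀, ?_⟩
      intro i hi
      rw [Finset.mem_singleton] at hi
      subst hi
      have : z₀ ∈ (Zb d b k A {i} i x₀).filter
          fun z => ∀ w ∈ Line d b k i z, Rel d b k A T z₀ w := by
        rw [Finset.mem_filter]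
        exact ⟨hz₀mem, fun w hw => line_rel hb hzR halive z₀ hz₀line w hw⟩
      calc (RSet b A k).card ^ (1 - 1) = 1 := by norm_num
        _ ≤ _ := le_add_of_le_of_nonneg (Finset.card_pos.mpr ⟨z₀, this⟩) (Nat.zero_le _)
    · -- inductive step
      have hρp : 1 ≤ (RSet b A k).card ^ p := Nat.one_le_pow _ _ hρ
      have hρp1 : 1 ≤ (RSet b A k).card ^ (p-1) := Nat.one_le_pow _ _ hρ
      have h5p : 1 ≤ 5 ^ p := Nat.one_le_pow _ _ (by omega)
      have hps : p + 1 - 1 = p := by omega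
      rw [hps] at hsmall ⊢
      have hρpp : (RSet b A k).card ^ p
          = (RSet b A k).card ^ (p-1) * (RSet b A k).card := by
        rw [← pow_succ]; congr 1; omega
      have hs : s.Nonempty := Finset.card_pos.mp (by omega)
      set i₀ := s.min' hs with hi₀def
      have hi₀ : i₀ ∈ s := s.min'_mem hs
      set s' := s.erase i₀ with hs'def
      have hcard' : s'.card = p := by rw [hs'def, Finset.card_erase_of_mem hi₀]; omega
      have hs'ne : s'.Nonempty := Finset.card_pos.mp (by omega)
      set i₁ := s'.min' hs'ne with hi₁def
      have hi₁ : i₁ ∈ s' := s'.min'_mem hs'ne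
      have hi₁s : i₁ ∈ s := Finset.mem_of_mem_erase hi₁
      have hi₁₀ : i₁ ≠ i₀ := Finset.ne_of_mem_erase hi₁
      have hnotmem : ∀ j, j ∉ s' → j ≠ i₀ → j ∉ s := by
        intro j hj hji hjs
        exact hj (Finset.mem_erase.mpr ⟨hji, hjs⟩)
      have hX₀ : ∀ x ∈ RSet b A k, ∀ j, j ∉ s' → Function.update x₀ i₀ x j ∈ RSet b A k := by
        intro x hx j hj
        by_cases hji : j = i₀
        · subst hji; simpa using hx
        · rw [Function.update_of_ne hji]
          exact hx₀ j (hnotmem j hj hji)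
      have hColi₀ : ∀ x, ∀ w ∈ Gs d b k A s' (Function.update x₀ i₀ x), w i₀ = x := by
        intro x w hw
        obtain ⟨i, hi, hwi, hR, ho⟩ := mem_Gs.mp hw
        rw [ho i₀ (Finset.notMem_erase i₀ s)]
        simp
      have hColsub : ∀ x ∈ RSet b A k,
          Gs d b k A s' (Function.update x₀ i₀ x) ⊆ Gs d b k A s x₀ := by
        intro x hx w hw
        obtain ⟨i, hi, hwi, hR, ho⟩ := mem_Gs.mp hw
        have his : i ∈ s := Finset.mem_of_mem_erase hi
        rw [mem_Gs]
        refine ⟨i, his, hwi, ?_, ?_⟩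
        · intro j hjs hji
          by_cases hji₀ : j = i₀
          · subst hji₀
            rw [hColi₀ x w hw]; exact hx
          · exact hR j (Finset.mem_erase.mpr ⟨hji₀, hjs⟩) hji
        · intro j hjs
          have hji₀ : j ≠ i₀ := fun h => hjs (h ▸ hi₀)
          have : j ∉ s' := fun h => hjs (Finset.mem_of_mem_erase h)
          rw [ho j this, Function.update_of_ne hji₀]
      have hsumtx : ∑ x ∈ RSet b A k,
          (T ∩ Gs d b k A s' (Function.update x₀ i₀ x)).card
            ≤ (T ∩ Gs d b k A s x₀).card := by
        rw [← Finset.card_biUnion]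
        · apply Finset.card_le_card
          intro w hw
          rw [Finset.mem_biUnion] at hw
          obtain ⟨x, hx, hw⟩ := hw
          obtain ⟨hwT, hwC⟩ := Finset.mem_inter.mp hw
          exact Finset.mem_inter.mpr ⟨hwT, hColsub x hx hwC⟩
        · intro x hx y hy hxy
          rw [Function.onFun, Finset.disjoint_left]
          intro w hw hw'
          apply hxy
          rw [← hColi₀ x w (Finset.mem_inter.mp hw).2, ← hColi₀ y w (Finset.mem_inter.mp hw').2]
      set Good := (RSet b A k).filter
        (fun x => 3 * 5 ^ p * (T ∩ Gs d b k A s' (Function.update x₀ i₀ x)).card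
          ≤ (RSet b A k).card ^ (p - 1)) with hGooddef
      have hGoodsub : Good ⊆ RSet b A k := Finset.filter_subset _ _
      have hbad : ((RSet b A k) \ Good).card * ((RSet b A k).card ^ (p-1) + 1)
          ≤ 3 * 5 ^ p * (T ∩ Gs d b k A s x₀).card := by
        calc ((RSet b A k) \ Good).card * ((RSet b A k).card ^ (p-1) + 1)
            = ∑ _x ∈ (RSet b A k) \ Good, ((RSet b A k).card ^ (p-1) + 1) := by
              rw [Finset.sum_const, smul_eq_mul]
          _ ≤ ∑ x ∈ (RSet b A k) \ Good,
              3 * 5 ^ p * (T ∩ Gs d b k A s' (Function.update x₀ i₀ x)).card := by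
              refine Finset.sum_le_sum fun x hx => ?_
              have hxn : ¬ (3 * 5 ^ p * (T ∩ Gs d b k A s' (Function.update x₀ i₀ x)).card
                  ≤ (RSet b A k).card ^ (p - 1)) := by
                intro hcon
                exact (Finset.mem_sdiff.mp hx).2
                  (Finset.mem_filter.mpr ⟨(Finset.mem_sdiff.mp hx).1, hcon⟩)
              omega
          _ ≤ ∑ x ∈ RSet b A k,
              3 * 5 ^ p * (T ∩ Gs d b k A s' (Function.update x₀ i₀ x)).card :=
              Finset.sum_le_sum_of_subset (Finset.sdiff_subset)
          _ = 3 * 5 ^ p * ∑ x ∈ RSet b A k,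
              (T ∩ Gs d b k A s' (Function.update x₀ i₀ x)).card := by
              rw [Finset.mul_sum]
          _ ≤ 3 * 5 ^ p * (T ∩ Gs d b k A s x₀).card :=
              Nat.mul_le_mul_left _ hsumtx
      have hbad5 : 5 * ((RSet b A k) \ Good).card ≤ (RSet b A k).card := by
        have h1 : 5 * (((RSet b A k) \ Good).card * ((RSet b A k).card ^ (p-1) + 1))
            ≤ 5 * (3 * 5 ^ p * (T ∩ Gs d b k A s x₀).card) := Nat.mul_le_mul_left _ hbad
        have h2 : 5 * (3 * 5 ^ p * (T ∩ Gs d b k A s x₀).card)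
            = 3 * 5 ^ (p+1) * (T ∩ Gs d b k A s x₀).card := by ring
        have h3 : 5 * (((RSet b A k) \ Good).card * ((RSet b A k).card ^ (p-1) + 1))
            ≤ (RSet b A k).card ^ (p-1) * (RSet b A k).card := by
          rw [h2] at h1
          exact h1.trans (hsmall.trans_eq hρpp)
        have h4 : (5 * ((RSet b A k) \ Good).card) * (RSet b A k).card ^ (p-1)
            ≤ (RSet b A k).card * (RSet b A k).card ^ (p-1) := by
          calc (5 * ((RSet b A k) \ Good).card) * (RSet b A k).card ^ (p-1)
              ≤ 5 * (((RSet b A k) \ Good).card * ((RSet b A k).card ^ (p-1) + 1)) := by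
                rw [Nat.mul_assoc]
                exact Nat.mul_le_mul_left _ (Nat.mul_le_mul_left _ (by omega))
            _ ≤ (RSet b A k).card ^ (p-1) * (RSet b A k).card := h3
            _ = (RSet b A k).card * (RSet b A k).card ^ (p-1) := Nat.mul_comm _ _
        exact Nat.le_of_mul_le_mul_right h4 (by omega)
      have hGoodBig : 4 * (RSet b A k).card ≤ 5 * Good.card := by
        have h1 := Finset.card_sdiff_of_subset hGoodsub
        have h2 := Finset.card_le_card hGoodsub
        omega
      have hGoodne : Good.Nonempty := by
        rw [← Finset.card_pos]
        omega
      have hIH : ∀ x : ℕ, ∃ v : Fin d → ℕ, x ∈ Good → ∀ i ∈ s',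
          (RSet b A k).card ^ (p - 1) ≤
          ((Zb d b k A s' i (Function.update x₀ i₀ x)).filter
            fun z => ∀ w ∈ Line d b k i z, Rel d b k A T v w).card
          + 5 ^ p * (T ∩ Gs d b k A s' (Function.update x₀ i₀ x)).card := by
        intro x
        by_cases hx : x ∈ Good
        · have hxR : x ∈ RSet b A k := hGoodsub hx
          have hgood := (Finset.mem_filter.mp hx).2
          obtain ⟨v, hv⟩ := ih hp s' (Function.update x₀ i₀ x) hcard' (hX₀ x hxR) hgood
          exact ⟨v, fun _ => hv⟩
        · exact ⟨fun _ => 0, fun h => absurd h hx⟩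
      choose v hv using hIH
      -- rows
      have hZ₀card : (Zb d b k A s i₀ x₀).card = (RSet b A k).card ^ p := by
        rw [card_Zb hi₀, hcard, hps]
      set AliveRow := (Zb d b k A s i₀ x₀).filter
        (fun z => ∀ w ∈ Line d b k i₀ z, w ∉ T) with hAliveDef
      have hAliveSub : AliveRow ⊆ Zb d b k A s i₀ x₀ := Finset.filter_subset _ _
      have hdead : (Zb d b k A s i₀ x₀ \ AliveRow).card ≤ (T ∩ Gs d b k A s x₀).card := by
        have hch : ∀ z, ∃ w, z ∈ Zb d b k A s i₀ x₀ \ AliveRow →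
            w ∈ T ∩ Gs d b k A s x₀ ∧ w ∈ Line d b k i₀ z := by
          intro z
          by_cases hz : z ∈ Zb d b k A s i₀ x₀ \ AliveRow
          · obtain ⟨hz1, hz2⟩ := Finset.mem_sdiff.mp hz
            have : ¬ ∀ w ∈ Line d b k i₀ z, w ∉ T := by
              intro hcon
              exact hz2 (Finset.mem_filter.mpr ⟨hz1, hcon⟩)
            push_neg at this
            obtain ⟨w, hwL, hwT⟩ := this
            exact ⟨w, fun _ => ⟨Finset.mem_inter.mpr ⟨hwT, line_subset_Gs hi₀ hz1 hwL⟩, hwL⟩⟩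
          · exact ⟨z, fun h => absurd h hz⟩
        choose wf hwf using hch
        refine Finset.card_le_card_of_injOn wf (fun z hz => (hwf z hz).1) ?_
        intro z hz z' hz' heq
        rw [Finset.mem_coe] at hz hz'
        have e1 := line_base (Finset.mem_sdiff.mp hz).1 (hwf z hz).2
        have e2 := line_base (Finset.mem_sdiff.mp hz').1 (hwf z' hz').2
        rw [← e1, ← e2, heq]
      set Attach := fun x : ℕ => (Zb d b k A s i₀ x₀).filter
        (fun z => Function.update (Function.update z i₀ x) i₁ 0 ∈
          ((Zb d b k A s' i₁ (Function.update x₀ i₀ x)).filter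
            fun z' => ∀ w ∈ Line d b k i₁ z', Rel d b k A T (v x) w)) with hAttachDef
      have hattach : ∀ x ∈ Good, (RSet b A k).card ^ p ≤ (Attach x).card
          + (RSet b A k).card *
            (5 ^ p * (T ∩ Gs d b k A s' (Function.update x₀ i₀ x)).card) := by
        intro x hx
        have hxR : x ∈ RSet b A k := hGoodsub hx
        have hvx := hv x hx i₁ hi₁
        set ACx := (Zb d b k A s' i₁ (Function.update x₀ i₀ x)).filter
          (fun z' => ∀ w ∈ Line d b k i₁ z', Rel d b k A T (v x) w) with hACdef
        have hinj : (ACx ×ˢ RSet b A k).card ≤ (Attach x).card := by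
          refine Finset.card_le_card_of_injOn
            (fun zc => Function.update (Function.update zc.1 i₀ 0) i₁ zc.2) ?_ ?_
          · rintro ⟨β, c⟩ hβc
            obtain ⟨hβ, hc⟩ := Finset.mem_product.mp hβc
            have hβZ : β ∈ Zb d b k A s' i₁ (Function.update x₀ i₀ x) :=
              Finset.filter_subset _ _ hβ
            obtain ⟨hβ1, hβ2, hβ3⟩ := zb_coords hβZ
            have hβi₀ : β i₀ = x := by
              rw [hβ3 i₀ (Finset.notMem_erase i₀ s) hi₁₀.symm]; simp
            have hzZ : Function.update (Function.update β i₀ 0) i₁ c ∈ Zb d b k A s i₀ x₀ := by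
              refine zb_mem ?_ ?_ ?_
              · rw [Function.update_of_ne hi₁₀.symm]; simp
              · intro j hjs hji₀
                by_cases hji₁ : j = i₁
                · subst hji₁; simpa using hc
                · rw [Function.update_of_ne hji₁, Function.update_of_ne hji₀]
                  exact hβ2 j (Finset.mem_erase.mpr ⟨hji₀, hjs⟩) hji₁
              · intro j hjs hji₀
                have hji₁ : j ≠ i₁ := fun h => hjs (h ▸ hi₁s)
                rw [Function.update_of_ne hji₁, Function.update_of_ne hji₀,
                  hβ3 j (fun h => hjs (Finset.mem_of_mem_erase h)) hji₁,
                  Function.update_of_ne hji₀]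
            rw [hAttachDef, Finset.mem_coe, Finset.mem_filter]
            refine ⟨hzZ, ?_⟩
            have hback : Function.update (Function.update
                (Function.update (Function.update β i₀ 0) i₁ c) i₀ x) i₁ 0 = β := by
              funext j
              by_cases hji₁ : j = i₁
              · subst hji₁; rw [Function.update_self, hβ1]
              · rw [Function.update_of_ne hji₁]
                by_cases hji₀ : j = i₀
                · subst hji₀; rw [Function.update_self, hβi₀]
                · rw [Function.update_of_ne hji₀, Function.update_of_ne hji₁,
                    Function.update_of_ne hji₀]
            rw [hback]
            exact hβ
          · rintro ⟨β, c⟩ hβc ⟨β', c'⟩ hβc' heq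
            rw [Finset.mem_coe, Finset.mem_product] at hβc hβc'
            dsimp only at hβc hβc' heq ⊢
            have hβZ := Finset.filter_subset _ _ hβc.1
            have hβZ' := Finset.filter_subset _ _ hβc'.1
            obtain ⟨hβ1, hβ2, hβ3⟩ := zb_coords hβZ
            obtain ⟨hβ1', hβ2', hβ3'⟩ := zb_coords hβZ'
            have hcc : c = c' := by
              have := congrFun heq i₁
              simpa using this
            have hββ : β = β' := by
              funext j
              by_cases hji₁ : j = i₁
              · subst hji₁; rw [hβ1, hβ1']
              · by_cases hji₀ : j = i₀
                · subst hji₀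
                  rw [hβ3 i₀ (Finset.notMem_erase i₀ s) hi₁₀.symm,
                    hβ3' i₀ (Finset.notMem_erase i₀ s) hi₁₀.symm]
                · have := congrFun heq j
                  simpa [Function.update_of_ne hji₁, Function.update_of_ne hji₀] using this
            rw [hcc, hββ]
        rw [Finset.card_product] at hinj
        have h1 : (RSet b A k).card ^ (p-1) * (RSet b A k).card
            ≤ (ACx.card + 5 ^ p * (T ∩ Gs d b k A s' (Function.update x₀ i₀ x)).card)
              * (RSet b A k).card := Nat.mul_le_mul_right _ hvx
        rw [Nat.add_mul] at h1
        have h2 : 5 ^ p * (T ∩ Gs d b k A s' (Function.update x₀ i₀ x)).card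
            * (RSet b A k).card = (RSet b A k).card *
            (5 ^ p * (T ∩ Gs d b k A s' (Function.update x₀ i₀ x)).card) := Nat.mul_comm _ _
        rw [h2] at h1
        rw [hρpp]
        omega
      have hunatt : ∀ x ∈ Good, (Zb d b k A s i₀ x₀ \ Attach x).card ≤
          (RSet b A k).card *
            (5 ^ p * (T ∩ Gs d b k A s' (Function.update x₀ i₀ x)).card) := by
        intro x hx
        have h1 := hattach x hx
        have hsub' : Attach x ⊆ Zb d b k A s i₀ x₀ := Finset.filter_subset _ _
        have h2 : (Zb d b k A s i₀ x₀ \ Attach x).card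
            = (Zb d b k A s i₀ x₀).card - (Attach x).card := Finset.card_sdiff_of_subset hsub'
        have h3 : (Attach x).card ≤ (Zb d b k A s i₀ x₀).card := Finset.card_le_card hsub'
        omega
      set AllUn := (Zb d b k A s i₀ x₀).filter (fun z => ∀ x ∈ Good, z ∉ Attach x)
        with hAllUnDef
      have hallun : AllUn.card ≤ 2 * (5 ^ p * (T ∩ Gs d b k A s x₀).card) := by
        have h1 : Good.card * AllUn.card ≤
            ∑ x ∈ Good, (Zb d b k A s i₀ x₀ \ Attach x).card := by
          rw [← smul_eq_mul, ← Finset.sum_const]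
          refine Finset.sum_le_sum fun x hx => ?_
          refine Finset.card_le_card fun z hz => ?_
          obtain ⟨hz1, hz2⟩ := Finset.mem_filter.mp hz
          exact Finset.mem_sdiff.mpr ⟨hz1, hz2 x hx⟩
        have h2 : ∑ x ∈ Good, (Zb d b k A s i₀ x₀ \ Attach x).card ≤
            (RSet b A k).card * (5 ^ p * (T ∩ Gs d b k A s x₀).card) := by
          calc ∑ x ∈ Good, (Zb d b k A s i₀ x₀ \ Attach x).card
              ≤ ∑ x ∈ Good, (RSet b A k).card *
                (5 ^ p * (T ∩ Gs d b k A s' (Function.update x₀ i₀ x)).card) :=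
                Finset.sum_le_sum (fun x hx => hunatt x hx)
            _ = (RSet b A k).card * (5 ^ p * ∑ x ∈ Good,
                (T ∩ Gs d b k A s' (Function.update x₀ i₀ x)).card) := by
                simp only [Finset.mul_sum]
            _ ≤ (RSet b A k).card * (5 ^ p * (T ∩ Gs d b k A s x₀).card) := by
                refine Nat.mul_le_mul_left _ (Nat.mul_le_mul_left _ ?_)
                exact (Finset.sum_le_sum_of_subset hGoodsub).trans hsumtx
        have h3 : (RSet b A k).card * (4 * AllUn.card) ≤
            (RSet b A k).card * (5 * (5 ^ p * (T ∩ Gs d b k A s x₀).card)) := by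
          calc (RSet b A k).card * (4 * AllUn.card) = (4 * (RSet b A k).card) * AllUn.card := by
                ring
            _ ≤ (5 * Good.card) * AllUn.card := Nat.mul_le_mul_right _ hGoodBig
            _ = 5 * (Good.card * AllUn.card) := by ring
            _ ≤ 5 * ((RSet b A k).card * (5 ^ p * (T ∩ Gs d b k A s x₀).card)) :=
                Nat.mul_le_mul_left _ (h1.trans h2)
            _ = (RSet b A k).card * (5 * (5 ^ p * (T ∩ Gs d b k A s x₀).card)) := by ring
        have h4 := Nat.le_of_mul_le_mul_left h3 (by omega : 0 < (RSet b A k).card)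
        omega
      -- the linking argument
      obtain ⟨xs, hxs⟩ := hGoodne
      have hrelline : ∀ x ∈ Good, ∀ z ∈ Attach x, ∀ w ∈ Line d b k i₀ z,
          (∀ w' ∈ Line d b k i₀ z, w' ∉ T) → Rel d b k A T (v x) w := by
        intro x hx z hz w hw halive
        obtain ⟨hzZ, hβmem⟩ := Finset.mem_filter.mp hz
        obtain ⟨hβZ, hβprop⟩ := Finset.mem_filter.mp hβmem
        obtain ⟨hz0, hzR, hzO⟩ := zb_coords hzZ
        have hzi₁R : z i₁ ∈ RSet b A k := hzR i₁ hi₁s hi₁₀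
        have hpline : Function.update z i₀ x ∈
            Line d b k i₁ (Function.update (Function.update z i₀ x) i₁ 0) := by
          rw [mem_Line]
          refine ⟨z i₁, mem_RSet_lt hb hzi₁R, ?_⟩
          funext j
          by_cases hji₁ : j = i₁
          · subst hji₁
            rw [Function.update_self, Function.update_of_ne hi₁₀]
          · rw [Function.update_of_ne hji₁, Function.update_of_ne hji₁]
        have h1 : Rel d b k A T (v x) (Function.update z i₀ x) := hβprop _ hpline
        have hpxLine : Function.update z i₀ x ∈ Line d b k i₀ z :=
          mem_Line.mpr ⟨x, mem_RSet_lt hb (hGoodsub hx), rfl⟩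
        exact reachIn_trans h1 (line_rel hb (zb_rset hx₀ hzZ) halive _ hpxLine w hw)
      have hlink : ∀ x ∈ Good, ∀ w, Rel d b k A T (v x) w → Rel d b k A T (v xs) w := by
        intro x hx w hrel
        have hux3 : ∀ y ∈ Good, 3 * (Zb d b k A s i₀ x₀ \ Attach y).card
            ≤ (RSet b A k).card ^ p := by
          intro y hy
          have h1 := hunatt y hy
          have hgood := (Finset.mem_filter.mp hy).2
          have h2 : (RSet b A k).card * (3 * 5 ^ p *
              (T ∩ Gs d b k A s' (Function.update x₀ i₀ y)).card)
              ≤ (RSet b A k).card * (RSet b A k).card ^ (p-1) :=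
            Nat.mul_le_mul_left _ hgood
          have h3 : (RSet b A k).card * (3 * 5 ^ p *
              (T ∩ Gs d b k A s' (Function.update x₀ i₀ y)).card)
              = 3 * ((RSet b A k).card *
                (5 ^ p * (T ∩ Gs d b k A s' (Function.update x₀ i₀ y)).card)) := by ring
          have h4 : (RSet b A k).card * (RSet b A k).card ^ (p-1)
              = (RSet b A k).card ^ p := by rw [hρpp]; ring
          rw [h3, h4] at h2
          omega
        have htc : 15 * (T ∩ Gs d b k A s x₀).card ≤ (RSet b A k).card ^ p := by
          have h1 : 15 * (T ∩ Gs d b k A s x₀).card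
              ≤ 3 * 5 ^ (p+1) * (T ∩ Gs d b k A s x₀).card := by
            have : 15 ≤ 3 * 5 ^ (p+1) := by
              have : 5 ^ (p+1) = 5 ^ p * 5 := pow_succ 5 p
              omega
            exact Nat.mul_le_mul_right _ this
          exact h1.trans hsmall
        set Ok := AliveRow ∩ (Attach x ∩ Attach xs) with hOkdef
        have hOksub : Ok ⊆ Zb d b k A s i₀ x₀ := (Finset.inter_subset_left).trans hAliveSub
        have hOkcompl : Zb d b k A s i₀ x₀ \ Ok ⊆ (Zb d b k A s i₀ x₀ \ AliveRow) ∪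
            ((Zb d b k A s i₀ x₀ \ Attach x) ∪ (Zb d b k A s i₀ x₀ \ Attach xs)) := by
          intro z hz
          obtain ⟨hz1, hz2⟩ := Finset.mem_sdiff.mp hz
          rw [Finset.mem_union, Finset.mem_union]
          by_cases ha : z ∈ AliveRow
          · by_cases hax : z ∈ Attach x
            · refine Or.inr (Or.inr (Finset.mem_sdiff.mpr ⟨hz1, fun hc => ?_⟩))
              exact hz2 (Finset.mem_inter.mpr ⟨ha, Finset.mem_inter.mpr ⟨hax, hc⟩⟩)
            · exact Or.inr (Or.inl (Finset.mem_sdiff.mpr ⟨hz1, hax⟩))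
          · exact Or.inl (Finset.mem_sdiff.mpr ⟨hz1, ha⟩)
        have hOkne : Ok.Nonempty := by
          rw [← Finset.card_pos]
          have e1 := Finset.card_sdiff_add_card_eq_card hOksub
          have e2 := (Finset.card_le_card hOkcompl).trans
            ((Finset.card_union_le _ _).trans (by
              exact Nat.add_le_add_left (Finset.card_union_le _ _) _))
          have e3 := hux3 x hx
          have e4 := hux3 xs hxs
          omega
        obtain ⟨z, hzOk⟩ := hOkne
        obtain ⟨hzA, hzAtt⟩ := Finset.mem_inter.mp hzOk
        obtain ⟨hzx, hzxs⟩ := Finset.mem_inter.mp hzAtt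
        have hzZ : z ∈ Zb d b k A s i₀ x₀ := hAliveSub hzA
        have halive : ∀ w' ∈ Line d b k i₀ z, w' ∉ T := (Finset.mem_filter.mp hzA).2
        have hb1 : Rel d b k A T (v x) (Function.update z i₀ x) :=
          hrelline x hx z hzx _ (mem_Line.mpr ⟨x, mem_RSet_lt hb (hGoodsub hx), rfl⟩) halive
        have hb2 : Rel d b k A T (v xs) (Function.update z i₀ xs) :=
          hrelline xs hxs z hzxs _ (mem_Line.mpr ⟨xs, mem_RSet_lt hb (hGoodsub hxs), rfl⟩) halive
        have hb3 : Rel d b k A T (Function.update z i₀ xs) (Function.update z i₀ x) :=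
          line_rel hb (zb_rset hx₀ hzZ) halive _
            (mem_Line.mpr ⟨xs, mem_RSet_lt hb (hGoodsub hxs), rfl⟩) _
            (mem_Line.mpr ⟨x, mem_RSet_lt hb (hGoodsub hx), rfl⟩)
        exact reachIn_trans hb2 (reachIn_trans hb3 (reachIn_trans (reachIn_symm hb1) hrel))
      refine ⟨v xs, ?_⟩
      intro i hi
      by_cases hii₀ : i = i₀
      · subst hii₀
        have hsub : AliveRow \ AllUn ⊆ (Zb d b k A s i₀ x₀).filter
            (fun z => ∀ w ∈ Line d b k i₀ z, Rel d b k A T (v xs) w) := by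
          intro z hz
          obtain ⟨hz1, hz2⟩ := Finset.mem_sdiff.mp hz
          have hzZ : z ∈ Zb d b k A s i₀ x₀ := hAliveSub hz1
          have halive : ∀ w ∈ Line d b k i₀ z, w ∉ T := (Finset.mem_filter.mp hz1).2
          have : ∃ x ∈ Good, z ∈ Attach x := by
            by_contra hcon
            push_neg at hcon
            exact hz2 (Finset.mem_filter.mpr ⟨hzZ, hcon⟩)
          obtain ⟨x, hxG, hxA⟩ := this
          rw [Finset.mem_filter]
          exact ⟨hzZ, fun w hw => hlink x hxG w (hrelline x hxG z hxA w hw halive)⟩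
        have hcard1 : (RSet b A k).card ^ p ≤ (AliveRow \ AllUn).card
            + ((T ∩ Gs d b k A s x₀).card + 2 * (5 ^ p * (T ∩ Gs d b k A s x₀).card)) := by
          have hsub2 : Zb d b k A s i₀ x₀ \ (AliveRow \ AllUn) ⊆
              (Zb d b k A s i₀ x₀ \ AliveRow) ∪ AllUn := by
            intro z hz
            obtain ⟨hz1, hz2⟩ := Finset.mem_sdiff.mp hz
            rw [Finset.mem_union]
            by_cases ha : z ∈ AliveRow
            · refine Or.inr ?_
              by_contra hc
              exact hz2 (Finset.mem_sdiff.mpr ⟨ha, hc⟩)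
            · exact Or.inl (Finset.mem_sdiff.mpr ⟨hz1, ha⟩)
          have e1 := Finset.card_sdiff_add_card_eq_card
            ((Finset.sdiff_subset).trans hAliveSub : AliveRow \ AllUn ⊆ Zb d b k A s i₀ x₀)
          have e2 := (Finset.card_le_card hsub2).trans (Finset.card_union_le _ _)
          omega
        have hle := Finset.card_le_card hsub
        have h5p1 : 1 + 2 * 5 ^ p ≤ 5 ^ (p+1) := by
          rw [pow_succ]; omega
        have hmul : (1 + 2 * 5 ^ p) * (T ∩ Gs d b k A s x₀).card
            ≤ 5 ^ (p+1) * (T ∩ Gs d b k A s x₀).card :=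
          Nat.mul_le_mul_right _ h5p1
        rw [Nat.add_mul, one_mul, Nat.mul_assoc] at hmul
        omega
      · have his' : i ∈ s' := Finset.mem_erase.mpr ⟨hii₀, hi⟩
        have hi₀i : i₀ ≠ i := fun h => hii₀ h.symm
        set U := Good.biUnion (fun x => (Zb d b k A s' i (Function.update x₀ i₀ x)).filter
          (fun z => ∀ w ∈ Line d b k i z, Rel d b k A T (v x) w)) with hUdef
        have hcoordi₀ : ∀ x z, z ∈ Zb d b k A s' i (Function.update x₀ i₀ x) → z i₀ = x := by
          intro x z hzZ
          obtain ⟨h1, h2, h3⟩ := zb_coords hzZ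
          rw [h3 i₀ (Finset.notMem_erase i₀ s) hi₀i]
          simp
        have hUcard : U.card = ∑ x ∈ Good,
            ((Zb d b k A s' i (Function.update x₀ i₀ x)).filter
              (fun z => ∀ w ∈ Line d b k i z, Rel d b k A T (v x) w)).card := by
          refine Finset.card_biUnion ?_
          intro x hx y hy hxy
          rw [Function.onFun, Finset.disjoint_left]
          intro z hz hz'
          apply hxy
          rw [← hcoordi₀ x z (Finset.filter_subset _ _ hz),
            ← hcoordi₀ y z (Finset.filter_subset _ _ hz')]
        have hUsub : U ⊆ (Zb d b k A s i x₀).filter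
            (fun z => ∀ w ∈ Line d b k i z, Rel d b k A T (v xs) w) := by
          intro z hz
          rw [hUdef, Finset.mem_biUnion] at hz
          obtain ⟨x, hxG, hz⟩ := hz
          obtain ⟨hzZ, hzprop⟩ := Finset.mem_filter.mp hz
          obtain ⟨h1, h2, h3⟩ := zb_coords hzZ
          rw [Finset.mem_filter]
          constructor
          · refine zb_mem h1 ?_ ?_
            · intro j hjs hji
              by_cases hji₀ : j = i₀
              · subst hji₀
                rw [hcoordi₀ x z hzZ]
                exact hGoodsub hxG
              · exact h2 j (Finset.mem_erase.mpr ⟨hji₀, hjs⟩) hji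
            · intro j hjs hji
              have hji₀ : j ≠ i₀ := fun h => hjs (h ▸ hi₀)
              rw [h3 j (fun h => hjs (Finset.mem_of_mem_erase h)) hji,
                Function.update_of_ne hji₀]
          · exact fun w hw => hlink x hxG w (hzprop w hw)
        have h3 : Good.card * (RSet b A k).card ^ (p-1) ≤
            U.card + 5 ^ p * (T ∩ Gs d b k A s x₀).card := by
          calc Good.card * (RSet b A k).card ^ (p-1)
              = ∑ _x ∈ Good, (RSet b A k).card ^ (p-1) := by
                rw [Finset.sum_const, smul_eq_mul]
            _ ≤ ∑ x ∈ Good, (((Zb d b k A s' i (Function.update x₀ i₀ x)).filter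
                (fun z => ∀ w ∈ Line d b k i z, Rel d b k A T (v x) w)).card
                + 5 ^ p * (T ∩ Gs d b k A s' (Function.update x₀ i₀ x)).card) :=
                Finset.sum_le_sum (fun x hx => hv x hx i his')
            _ = U.card + 5 ^ p * ∑ x ∈ Good,
                (T ∩ Gs d b k A s' (Function.update x₀ i₀ x)).card := by
                rw [Finset.sum_add_distrib, hUcard, Finset.mul_sum]
            _ ≤ U.card + 5 ^ p * (T ∩ Gs d b k A s x₀).card := by
                refine Nat.add_le_add_left (Nat.mul_le_mul_left _ ?_) _
                exact (Finset.sum_le_sum_of_subset hGoodsub).trans hsumtx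
        have h4 : ((RSet b A k) \ Good).card * (RSet b A k).card ^ (p-1)
            ≤ 3 * 5 ^ p * (T ∩ Gs d b k A s x₀).card := by
          refine le_trans ?_ hbad
          exact Nat.mul_le_mul_left _ (by omega)
        rw [Nat.mul_assoc] at h4
        have h5 : ((RSet b A k) \ Good).card + Good.card = (RSet b A k).card :=
          Finset.card_sdiff_add_card_eq_card hGoodsub
        have e : (RSet b A k).card ^ p = Good.card * (RSet b A k).card ^ (p-1)
            + ((RSet b A k) \ Good).card * (RSet b A k).card ^ (p-1) := by
          rw [hρpp, ← h5]
          ring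
        have hUle := Finset.card_le_card hUsub
        have hmul : 4 * (5 ^ p * (T ∩ Gs d b k A s x₀).card)
            ≤ 5 ^ (p+1) * (T ∩ Gs d b k A s x₀).card := by
          have h6 : (4 * 5 ^ p) * (T ∩ Gs d b k A s x₀).card
              ≤ 5 ^ (p+1) * (T ∩ Gs d b k A s x₀).card := by
            refine Nat.mul_le_mul_right _ ?_
            rw [pow_succ]
            omega
          rw [Nat.mul_assoc] at h6
          exact h6
        omega

end GenSep

namespace GenSep

theorem halfcut_self {V : Type*} (X : SimpleGraph V) (G : Finset V) : IsHalfCutSet X G G := by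
  refine ⟨subset_rfl, fun v => ?_⟩
  have h1 : X.compIn (↑(G \ G)) v = ∅ := by
    rw [Finset.sdiff_self, Finset.coe_empty]
    ext w
    simp only [Set.mem_empty_iff_false, iff_false]
    rintro ⟨hv, hw, -⟩
    exact hv
  rw [h1]
  simp

theorem cutHalf_le_card {V : Type*} (X : SimpleGraph V) (G : Finset V) :
    cutHalf X G ≤ G.card :=
  Nat.sInf_le ⟨G, halfcut_self X G, rfl⟩

variable {d b k : ℕ} {A : Finset ℕ}

theorem halfcut_bound (hd : 1 ≤ d) (hb : 1 ≤ b) (hρ : 1 ≤ (RSet b A k).card)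
    {T : Finset (Fin d → ℕ)} (hT : IsHalfCutSet (GenGraph d b A 1) (Gtop d b k A) T) :
    (RSet b A k).card ^ (d - 1) ≤ 30 * d * 5 ^ d * T.card := by
  obtain ⟨hTsub, hTcut⟩ := hT
  have hTint : T ∩ Gs d b k A Finset.univ (fun _ => 0) = T := by
    rw [Finset.inter_eq_left]
    exact hTsub
  by_cases hc : 3 * 5 ^ d * (T ∩ Gs d b k A Finset.univ (fun _ => 0)).card
      ≤ (RSet b A k).card ^ (d - 1)
  · obtain ⟨v, hAC⟩ := key hb hρ T d hd Finset.univ (fun _ => 0) (by simp)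
      (fun j hj => absurd (Finset.mem_univ j) hj) hc
    rw [hTint] at hAC
    set Cov := Finset.univ.biUnion (fun i : Fin d =>
      ((Zb d b k A Finset.univ i (fun _ => 0)).filter
        (fun z => ∀ w ∈ Line d b k i z, Rel d b k A T v w)).biUnion
        (fun z => Line d b k i z)) with hCovdef
    -- Cov is inside the component of v
    have hCovComp : Cov.card ≤
        ((GenGraph d b A 1).compIn ((↑(Gtop d b k A) : Set (Fin d → ℕ)) \ ↑T) v).ncard := by
      have hsub : (↑Cov : Set (Fin d → ℕ)) ⊆
          (GenGraph d b A 1).compIn ((↑(Gtop d b k A) : Set (Fin d → ℕ)) \ ↑T) v := by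
        intro w hw
        rw [Finset.mem_coe, hCovdef, Finset.mem_biUnion] at hw
        obtain ⟨i, -, hw⟩ := hw
        rw [Finset.mem_biUnion] at hw
        obtain ⟨z, hz, hw⟩ := hw
        exact (Finset.mem_filter.mp hz).2 w hw
      have hfin : ((GenGraph d b A 1).compIn
          ((↑(Gtop d b k A) : Set (Fin d → ℕ)) \ ↑T) v).Finite := by
        refine Set.Finite.subset (Gtop d b k A).finite_toSet ?_
        rintro w ⟨hv, hw, -⟩
        exact hw.1
      calc Cov.card = (↑Cov : Set (Fin d → ℕ)).ncard := (Set.ncard_coe_finset _).symm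
        _ ≤ _ := Set.ncard_le_ncard hsub hfin
    -- Gtop is covered by Cov and the lines of non-connected bases
    have hGcov : (Gtop d b k A).card ≤ Cov.card + d * (5 ^ d * T.card * b ^ k) := by
      set Rest := Finset.univ.biUnion (fun i : Fin d =>
        ((Zb d b k A Finset.univ i (fun _ => 0) \
          (Zb d b k A Finset.univ i (fun _ => 0)).filter
            (fun z => ∀ w ∈ Line d b k i z, Rel d b k A T v w))).biUnion
          (fun z => Line d b k i z)) with hRestdef
      have hsplit : Gtop d b k A ⊆ Cov ∪ Rest := by
        intro w hw
        rw [Gtop, Gs, Finset.mem_biUnion] at hw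
        obtain ⟨i, hi, hw⟩ := hw
        rw [Finset.mem_biUnion] at hw
        obtain ⟨z, hz, hw⟩ := hw
        rw [Finset.mem_union]
        by_cases hzf : z ∈ (Zb d b k A Finset.univ i (fun _ => 0)).filter
            (fun z => ∀ w ∈ Line d b k i z, Rel d b k A T v w)
        · exact Or.inl (Finset.mem_biUnion.mpr ⟨i, hi, Finset.mem_biUnion.mpr ⟨z, hzf, hw⟩⟩)
        · exact Or.inr (Finset.mem_biUnion.mpr ⟨i, hi, Finset.mem_biUnion.mpr
            ⟨z, Finset.mem_sdiff.mpr ⟨hz, hzf⟩, hw⟩⟩)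
      have hRest : Rest.card ≤ d * (5 ^ d * T.card * b ^ k) := by
        calc Rest.card ≤ ∑ i : Fin d, (((Zb d b k A Finset.univ i (fun _ => 0) \
              (Zb d b k A Finset.univ i (fun _ => 0)).filter
                (fun z => ∀ w ∈ Line d b k i z, Rel d b k A T v w))).biUnion
              (fun z => Line d b k i z)).card := Finset.card_biUnion_le
          _ ≤ ∑ i : Fin d, 5 ^ d * T.card * b ^ k := by
              refine Finset.sum_le_sum fun i _ => ?_
              calc (((Zb d b k A Finset.univ i (fun _ => 0) \
                    (Zb d b k A Finset.univ i (fun _ => 0)).filter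
                      (fun z => ∀ w ∈ Line d b k i z, Rel d b k A T v w))).biUnion
                    (fun z => Line d b k i z)).card
                  ≤ ∑ z ∈ (Zb d b k A Finset.univ i (fun _ => 0) \
                    (Zb d b k A Finset.univ i (fun _ => 0)).filter
                      (fun z => ∀ w ∈ Line d b k i z, Rel d b k A T v w)),
                      (Line d b k i z).card := Finset.card_biUnion_le
                _ ≤ 5 ^ d * T.card * b ^ k := by
                    rw [Finset.sum_congr rfl fun z _ => card_Line i z, Finset.sum_const,
                      smul_eq_mul]
                    refine Nat.mul_le_mul_right _ ?_
                    have h1 := hAC i (Finset.mem_univ i)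
                    have h2 : ((Zb d b k A Finset.univ i (fun _ => 0)).filter
                      (fun z => ∀ w ∈ Line d b k i z, Rel d b k A T v w))
                        ⊆ Zb d b k A Finset.univ i (fun _ => 0) := Finset.filter_subset _ _
                    have h3 := Finset.card_sdiff_of_subset h2
                    have h4 := Finset.card_le_card h2
                    have h5 : (Zb d b k A Finset.univ i (fun _ => 0)).card
                        = (RSet b A k).card ^ (d - 1) := by
                      rw [card_Zb (Finset.mem_univ i)]
                      congr 1
                      simp
                    omega
          _ = d * (5 ^ d * T.card * b ^ k) := by
              rw [Finset.sum_const, Finset.card_univ, Fintype.card_fin, smul_eq_mul]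
      calc (Gtop d b k A).card ≤ (Cov ∪ Rest).card := Finset.card_le_card hsplit
        _ ≤ Cov.card + Rest.card := Finset.card_union_le _ _
        _ ≤ Cov.card + d * (5 ^ d * T.card * b ^ k) := Nat.add_le_add_left hRest _
    have hcut : 2 * ((GenGraph d b A 1).compIn
        ((↑(Gtop d b k A) : Set (Fin d → ℕ)) \ ↑T) v).ncard
        ≤ (Gtop d b k A).card := by
      have h0 := hTcut v
      rwa [@Finset.coe_sdiff _ (fun a b => Classical.propDecidable (a = b))] at h0
    have hGge : (RSet b A k).card ^ (d - 1) * b ^ k ≤ (Gtop d b k A).card := by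
      have h0 := @card_Gs_ge d b k A Finset.univ ⟨0, by omega⟩
        (Finset.mem_univ _) (fun _ => 0)
      rw [Finset.card_univ, Fintype.card_fin] at h0
      exact h0
    have hfinal : (RSet b A k).card ^ (d - 1) * b ^ k ≤ 2 * (d * (5 ^ d * T.card * b ^ k)) := by
      omega
    have hform : 2 * (d * (5 ^ d * T.card * b ^ k)) = (2 * d * 5 ^ d * T.card) * b ^ k := by
      ring
    rw [hform] at hfinal
    have := Nat.le_of_mul_le_mul_right hfinal ((Nat.pow_pos (by omega : 0 < b) : 0 < b ^ k))
    calc (RSet b A k).card ^ (d - 1) ≤ 2 * d * 5 ^ d * T.card := this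
      _ ≤ 30 * d * 5 ^ d * T.card := by
        refine Nat.mul_le_mul_right _ ?_
        refine Nat.mul_le_mul_right _ ?_
        omega
  · rw [hTint] at hc
    push_neg at hc
    calc (RSet b A k).card ^ (d - 1) ≤ 3 * 5 ^ d * T.card := le_of_lt hc
      _ ≤ 30 * d * 5 ^ d * T.card := by
        refine Nat.mul_le_mul_right _ ?_
        have : 3 * 5 ^ d ≤ 30 * 5 ^ d := Nat.mul_le_mul_right _ (by omega)
        calc 3 * 5 ^ d ≤ 30 * 5 ^ d := this
          _ ≤ 30 * d * 5 ^ d := by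
            rw [Nat.mul_assoc]
            refine Nat.mul_le_mul_left _ ?_
            exact Nat.le_mul_of_pos_left _ (by omega)

theorem cutHalf_bound (hd : 1 ≤ d) (hb : 1 ≤ b) (hρ : 1 ≤ (RSet b A k).card) :
    (RSet b A k).card ^ (d - 1) ≤ 30 * d * 5 ^ d * cutHalf (GenGraph d b A 1) (Gtop d b k A) := by
  have hne : {t | ∃ T : Finset (Fin d → ℕ),
      IsHalfCutSet (GenGraph d b A 1) (Gtop d b k A) T ∧ T.card = t}.Nonempty :=
    ⟨(Gtop d b k A).card, Gtop d b k A, halfcut_self _ _, rfl⟩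
  obtain ⟨T, hT, hTc⟩ := Nat.sInf_mem hne
  rw [cutHalf, ← hTc]
  exact halfcut_bound hd hb hρ hT

theorem Gtop_subset_GenS (hb : 1 ≤ b) : ↑(Gtop d b k A) ⊆ GenS d b A 1 := by
  intro w hw
  rw [Finset.mem_coe, Gtop, mem_Gs] at hw
  obtain ⟨i, -, hwi, hR, -⟩ := hw
  exact genS_mem hb i hwi (fun j hj => hR j (Finset.mem_univ j) hj)

theorem sepHalf_ge (hb : 1 ≤ b) {n : ℕ} (hn : (Gtop d b k A).card ≤ n) :
    cutHalf (GenGraph d b A 1) (Gtop d b k A) ≤ sepHalf (GenGraph d b A 1) (GenS d b A 1) n := by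
  rw [sepHalf]
  refine le_csSup ⟨n, ?_⟩ ⟨Gtop d b k A, Gtop_subset_GenS hb, hn, rfl⟩
  rintro c ⟨G, -, hGc, rfl⟩
  exact (cutHalf_le_card _ _).trans hGc

end GenSep

/-- Lower bound on the separation profile of `S(d,b,A,1)`:
`sep¹ᐟ²(n) ≽ n^E` where `E = (d-1)·log(b-|A|) / ((d-1)·log(b-|A|) + log b)`. -/
theorem gen_sep_lower (d b : ℕ) (hd : 2 ≤ d) (hb : 3 ≤ b)
    (A : Finset ℕ) (hA : A ⊂ Finset.range b) (hAne : A.Nonempty) :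
    ∃ c : ℝ, 0 < c ∧ ∀ M : ℕ, ∃ n : ℕ, M ≤ n ∧
      c * (n : ℝ) ^ (((d : ℝ) - 1) * Real.log ((b - A.card : ℕ) : ℝ) /
          (((d : ℝ) - 1) * Real.log ((b - A.card : ℕ) : ℝ) + Real.log b))
        ≤ (sepHalf (GenGraph d b A 1) (GenS d b A 1) n : ℝ) := by
  classical
  have hb1 : 1 ≤ b := by omega
  have hAcard : A.card < b := by
    have := Finset.card_lt_card hA
    simpa using this
  set r : ℕ := b - A.card with hrdef
  have hr1 : 1 ≤ r := by omega
  set K : ℝ := ((30 * d * 5 ^ d : ℕ) : ℝ) with hKdef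
  have hKpos : 0 < K := by
    rw [hKdef]
    have : 0 < 30 * d * 5 ^ d := by positivity
    exact_mod_cast this
  have hdpos : (0:ℝ) < d := by exact_mod_cast (by omega : 0 < d)
  refine ⟨1 / (K * d), by positivity, ?_⟩
  intro M
  set k := M with hkdef
  have hρ : (GenSep.RSet b A k).card = r ^ k := GenSep.RSet_card hb1 hA.subset
  have hρ1 : 1 ≤ (GenSep.RSet b A k).card := by
    rw [hρ]; exact Nat.one_le_pow _ _ (by omega)
  set n := d * ((r ^ k) ^ (d - 1) * b ^ k) with hndef
  have hbk : M ≤ b ^ k := by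
    have h1 : M < 2 ^ M := Nat.lt_two_pow_self
    have h2 : 2 ^ M ≤ b ^ k := by
      rw [hkdef]
      exact Nat.pow_le_pow_left (by omega) M
    omega
  have hMn : M ≤ n := by
    have h1 : 1 ≤ (r ^ k) ^ (d-1) := Nat.one_le_pow _ _ (Nat.one_le_pow _ _ (by omega))
    calc M ≤ b ^ k := hbk
      _ = 1 * (1 * b ^ k) := by ring
      _ ≤ d * ((r ^ k) ^ (d - 1) * b ^ k) := by
          refine Nat.mul_le_mul (by omega) (Nat.mul_le_mul h1 le_rfl)
  have hGle : (GenSep.Gtop d b k A).card ≤ n := by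
    have h0 := GenSep.card_Gs_le (d := d) (b := b) (k := k) (A := A)
      (s := Finset.univ) (fun _ => 0)
    rw [Finset.card_univ, Fintype.card_fin, hρ] at h0
    exact h0
  have hsep := GenSep.sepHalf_ge (d := d) (b := b) (k := k) (A := A) hb1 hGle
  have hcut := GenSep.cutHalf_bound (d := d) (b := b) (k := k) (A := A)
    (by omega) hb1 hρ1
  rw [hρ] at hcut
  have hchain : (r ^ k) ^ (d - 1) ≤
      30 * d * 5 ^ d * sepHalf (GenGraph d b A 1) (GenS d b A 1) n :=
    hcut.trans (Nat.mul_le_mul_left _ hsep)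
  refine ⟨n, hMn, ?_⟩
  -- real analysis part
  set u : ℝ := ((d : ℝ) - 1) * Real.log (r : ℝ) with hudef
  set w : ℝ := u + Real.log b with hwdef
  have hlogr : 0 ≤ Real.log (r : ℝ) := by
    apply Real.log_nonneg
    exact_mod_cast hr1
  have hlogb : 0 < Real.log (b : ℝ) := by
    apply Real.log_pos
    exact_mod_cast (by omega : 1 < b)
  have hu0 : 0 ≤ u := by
    apply mul_nonneg _ hlogr
    have : (2:ℝ) ≤ d := by exact_mod_cast hd
    linarith
  have hw0 : 0 < w := by rw [hwdef]; linarith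
  set E : ℝ := u / w with hEdef
  have hE0 : 0 ≤ E := div_nonneg hu0 (le_of_lt hw0)
  have hE1 : E ≤ 1 := by
    rw [hEdef, div_le_one hw0, hwdef]
    linarith
  set P : ℝ := ((r : ℝ) ^ k) ^ (d - 1) with hPdef
  have hPpos : 0 < P := by positivity
  set X : ℝ := P * (b : ℝ) ^ k with hXdef
  have hXpos : 0 < X := by positivity
  have hdm1 : ((d - 1 : ℕ) : ℝ) = (d : ℝ) - 1 := by
    have : (1:ℕ) ≤ d := by omega
    push_cast [this]
    ring
  have hlogX : Real.log X = k * w := by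
    rw [hXdef, Real.log_mul (by positivity) (by positivity), hPdef,
      Real.log_pow, Real.log_pow, hwdef, hudef, Real.log_pow, hdm1]
    ring
  have hXE : X ^ E = P := by
    rw [Real.rpow_def_of_pos hXpos, hlogX]
    have h1 : (k : ℝ) * w * E = k * u := by
      rw [hEdef]
      field_simp
    rw [h1]
    have h2 : Real.log P = k * u := by
      rw [hPdef, Real.log_pow, Real.log_pow, hdm1, hudef]
      ring
    rw [← h2, Real.exp_log hPpos]
  have hnX : (n : ℝ) = (d : ℝ) * X := by
    rw [hndef, hXdef, hPdef]
    push_cast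
    ring
  have hnE : (n : ℝ) ^ E ≤ (d : ℝ) * P := by
    rw [hnX, Real.mul_rpow (le_of_lt hdpos) (le_of_lt hXpos), hXE]
    refine mul_le_mul_of_nonneg_right ?_ (le_of_lt hPpos)
    calc (d : ℝ) ^ E ≤ (d : ℝ) ^ (1:ℝ) :=
          Real.rpow_le_rpow_of_exponent_le (by exact_mod_cast (by omega : 1 ≤ d)) hE1
      _ = d := Real.rpow_one _
  have hchainR : P ≤ K * (sepHalf (GenGraph d b A 1) (GenS d b A 1) n : ℝ) := by
    have h0 : ((((r : ℕ) ^ k) ^ (d-1) : ℕ) : ℝ) ≤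
        ((30 * d * 5 ^ d * sepHalf (GenGraph d b A 1) (GenS d b A 1) n : ℕ) : ℝ) := by
      exact_mod_cast hchain
    rw [hPdef, hKdef]
    push_cast at h0 ⊢
    exact h0
  calc (1 / (K * (d:ℝ))) * (n : ℝ) ^ E ≤ (1 / (K * (d:ℝ))) * ((d:ℝ) * P) := by
        refine mul_le_mul_of_nonneg_left hnE (by positivity)
    _ = P / K := by
        field_simp
    _ ≤ (sepHalf (GenGraph d b A 1) (GenS d b A 1) n : ℝ) := by
        rw [div_le_iff₀ hKpos]
        calc P ≤ K * (sepHalf (GenGraph d b A 1) (GenS d b A 1) n : ℝ) := hchainR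
          _ = (sepHalf (GenGraph d b A 1) (GenS d b A 1) n : ℝ) * K := mul_comm _ _
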